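/- arXiv:1406.7427 — 3 statements merged into one kernel-verified Lean document; each statement's English description precedes it below -/
import Mathlib

section
/- There is a finite constant M > 0 such that for every integer k ≥ 1 and every x ≥ 0, x^2 |H_k''(x)| ≤ M·k, where H_k''(x) = ((k-1) - x) x^{k-2} e^{-x}/(k-1)! is the second derivative of H_k; moreover sup_{k ≥ 1} sup_{x ≥ 0} x^2|H_k''(x)|/k > 0. -/
open MeasureTheory Real Filter Set

noncomputable section

/-- `Hsecond k` : the second derivative of the Gamma(k,1) distribution function,
`x ↦ ((k-1) - x) x^{k-2} e^{-x}/(k-1)!`. -/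
def Hsecond (k : ℕ) (x : ℝ) : ℝ :=
  (((k : ℝ) - 1) - x) * x ^ ((k : ℝ) - 2) * Real.exp (-x) / (Nat.factorial (k - 1))

/-- Pointwise Gaussian-type bound `x^k e^{-x} ≤ k^k e^{-k} e^{-(√x-√k)²}`. -/
lemma pow_mul_exp_le (k : ℕ) (hk : 1 ≤ k) (x : ℝ) (hx : 0 < x) :
    x ^ k * Real.exp (-x) ≤ (k:ℝ) ^ k * Real.exp (-(k:ℝ)) *
      Real.exp (-(Real.sqrt x - Real.sqrt k) ^ 2) := by
  have hk0 : (0:ℝ) < k := by exact_mod_cast hk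
  set a := Real.sqrt x with ha
  set b := Real.sqrt k with hb
  have ha0 : 0 < a := Real.sqrt_pos.mpr hx
  have hb0 : 0 < b := Real.sqrt_pos.mpr hk0
  have hax : a ^ 2 = x := Real.sq_sqrt hx.le
  have hbk : b ^ 2 = (k:ℝ) := Real.sq_sqrt hk0.le
  have hlog : Real.log a - Real.log b ≤ a / b - 1 := by
    have := Real.log_le_sub_one_of_pos (div_pos ha0 hb0)
    rwa [Real.log_div ha0.ne' hb0.ne'] at this
  have hxk : x ^ k = Real.exp ((k:ℝ) * Real.log x) := by
    rw [← Real.log_pow, Real.exp_log (by positivity)]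
  have hkk : (k:ℝ) ^ k = Real.exp ((k:ℝ) * Real.log k) := by
    rw [← Real.log_pow, Real.exp_log (by positivity)]
  rw [hxk, hkk, ← Real.exp_add, ← Real.exp_add, ← Real.exp_add, Real.exp_le_exp]
  have hlx : Real.log x = 2 * Real.log a := by
    rw [← hax, Real.log_pow]; push_cast; ring
  have hlk : Real.log (k:ℝ) = 2 * Real.log b := by
    rw [← hbk, Real.log_pow]; push_cast; ring
  rw [hlx, hlk, ← hax, ← hbk]
  have h2 : b ^ 2 * (Real.log a - Real.log b) ≤ b * a - b ^ 2 := by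
    have := mul_le_mul_of_nonneg_left hlog (by positivity : (0:ℝ) ≤ b ^ 2)
    calc b ^ 2 * (Real.log a - Real.log b) ≤ b ^ 2 * (a / b - 1) := this
      _ = b * a - b ^ 2 := by field_simp
  nlinarith [h2]

/-- Stirling lower bound : `√π * (√(2k) * (k/e)^k) ≤ k!`. -/
lemma stirling_lower (k : ℕ) (hk : 1 ≤ k) :
    Real.sqrt π * (Real.sqrt (2 * k : ℝ) * ((k:ℝ) / Real.exp 1) ^ k) ≤ (Nat.factorial k : ℝ) := by
  have hk0 : (0:ℝ) < k := by exact_mod_cast hk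
  have hS : Real.sqrt π ≤ Stirling.stirlingSeq k := by
    obtain ⟨n, rfl⟩ := Nat.exists_eq_add_of_le hk
    have h : Tendsto (Stirling.stirlingSeq ∘ Nat.succ) atTop (nhds (Real.sqrt π)) :=
      Stirling.tendsto_stirlingSeq_sqrt_pi.comp (tendsto_add_atTop_nat 1)
    have := Stirling.stirlingSeq'_antitone.le_of_tendsto h n
    simpa [Nat.add_comm] using this
  have hden : 0 < Real.sqrt (2 * k : ℝ) * ((k:ℝ) / Real.exp 1) ^ k := by positivity
  rw [Stirling.stirlingSeq, le_div_iff₀ hden] at hS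
  exact hS

set_option maxHeartbeats 1000000 in
/-- The main pointwise bound with constant `2`. -/
lemma main_bound (k : ℕ) (hk : 1 ≤ k) (x : ℝ) (hx : 0 ≤ x) :
    x ^ 2 * |Hsecond k x| ≤ 2 * k := by
  have hk0 : (0:ℝ) < k := by exact_mod_cast hk
  rcases eq_or_lt_of_le hx with h0 | hx
  · subst h0; simp only [ne_eq, OfNat.ofNat_ne_zero, not_false_eq_true, zero_pow, zero_mul]
    positivity
  -- rewrite x^2 * |Hsecond k x|
  have hfac : (0:ℝ) < (Nat.factorial (k-1) : ℝ) := by exact_mod_cast (Nat.factorial_pos _)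
  have hrp : (0:ℝ) < x ^ ((k:ℝ) - 2) := Real.rpow_pos_of_pos hx _
  have habs : |Hsecond k x| =
      |((k:ℝ) - 1) - x| * x ^ ((k:ℝ) - 2) * Real.exp (-x) / (Nat.factorial (k - 1)) := by
    unfold Hsecond
    rw [abs_div, abs_mul, abs_mul, abs_of_pos hrp, abs_of_pos (Real.exp_pos _),
      abs_of_pos hfac]
  have hpow : x ^ 2 * x ^ ((k:ℝ) - 2) = x ^ k := by
    rw [← Real.rpow_natCast x 2, ← Real.rpow_add hx, ← Real.rpow_natCast x k]
    norm_num
  have key : |((k:ℝ) - 1) - x| * (x ^ k * Real.exp (-x)) ≤ 2 * k * (Nat.factorial (k-1)) := by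
    set a := Real.sqrt x
    set b := Real.sqrt (k:ℝ)
    have ha0 : 0 < a := Real.sqrt_pos.mpr hx
    have hb1 : 1 ≤ b := by
      rw [show (1:ℝ) = Real.sqrt 1 by simp]
      exact Real.sqrt_le_sqrt (by exact_mod_cast hk)
    have hb0 : 0 < b := lt_of_lt_of_le one_pos hb1
    have hax : a ^ 2 = x := Real.sq_sqrt hx.le
    have hbk : b ^ 2 = (k:ℝ) := Real.sq_sqrt hk0.le
    set u := |a - b| with hu
    have hu0 : 0 ≤ u := abs_nonneg _
    have huab : (a - b) ^ 2 = u ^ 2 := (sq_abs _).symm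
    have huba : |b - a| = u := by rw [hu, abs_sub_comm]
    have hab : a ≤ b + u := by
      have h := le_abs_self (a - b); rw [← hu] at h; linarith
    have hsa : Real.sqrt x = a := rfl
    have hsb : Real.sqrt (k:ℝ) = b := rfl
    clear_value a b u
    -- |k-1-x| ≤ 2*b*u + u^2 + 1
    have h1 : |((k:ℝ) - 1) - x| ≤ 2 * b * u + u ^ 2 + 1 := by
      have hkx : |(k:ℝ) - x| = u * (a + b) := by
        rw [← hax, ← hbk, show b^2 - a^2 = (b - a) * (b + a) by ring, abs_mul,
          huba, abs_of_pos (by linarith : (0:ℝ) < b + a)]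
        ring
      calc |((k:ℝ) - 1) - x| ≤ |(k:ℝ) - x| + 1 := by
            have := abs_sub_abs_le_abs_sub ((k:ℝ) - 1 - x) ((k:ℝ) - x)
            have h := abs_sub ((k:ℝ) - 1 - x) ((k:ℝ) - x)
            calc |((k:ℝ) - 1) - x| = |((k:ℝ) - x) + (-1)| := by ring_nf
              _ ≤ |(k:ℝ) - x| + |(-1:ℝ)| := abs_add_le _ _
              _ = |(k:ℝ) - x| + 1 := by norm_num
        _ = u * (a + b) + 1 := by rw [hkx]
        _ ≤ u * ((b + u) + b) + 1 := by nlinarith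
        _ = 2 * b * u + u ^ 2 + 1 := by ring
    -- x^k e^{-x} ≤ k^k e^{-k} e^{-u²}
    have h2 : x ^ k * Real.exp (-x) ≤ (k:ℝ) ^ k * Real.exp (-(k:ℝ)) * Real.exp (-u ^ 2) := by
      have := pow_mul_exp_le k hk x hx
      rwa [hsa, hsb, huab] at this
    -- (2bu + u² + 1) e^{-u²} ≤ 4b
    have hexp : 1 + u ^ 2 ≤ Real.exp (u ^ 2) := by
      have := Real.add_one_le_exp (u ^ 2); linarith
    have hexp0 : 0 < Real.exp (u ^ 2) := Real.exp_pos _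
    have he0 : (0:ℝ) < Real.exp (-u ^ 2) := Real.exp_pos _
    have hA : Real.exp (-u ^ 2) * (1 + u ^ 2) ≤ 1 := by
      have h := mul_le_mul_of_nonneg_left hexp he0.le
      rwa [← Real.exp_add, neg_add_cancel, Real.exp_zero] at h
    have h2uE : 2 * u * Real.exp (-u ^ 2) ≤ 1 := by
      nlinarith [hA, mul_nonneg he0.le (sq_nonneg (u - 1))]
    have hu2E : u ^ 2 * Real.exp (-u ^ 2) ≤ 1 := by
      nlinarith [hA, he0.le]
    have hE1 : Real.exp (-u ^ 2) ≤ 1 := by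
      nlinarith [hA, mul_nonneg he0.le (sq_nonneg u)]
    have h3 : (2 * b * u + u ^ 2 + 1) * Real.exp (-u ^ 2) ≤ 4 * b := by
      nlinarith [mul_le_mul_of_nonneg_left h2uE hb0.le, hu2E, hE1, hb1]
    -- Stirling : 2 b k^k e^{-k} ≤ k!
    have h4 : 4 * b * ((k:ℝ) ^ k * Real.exp (-(k:ℝ))) ≤ 2 * k * (Nat.factorial (k-1)) := by
      have hst := stirling_lower k hk
      have hfact : (Nat.factorial k : ℝ) = k * (Nat.factorial (k-1)) := by
        rcases Nat.exists_eq_add_of_le hk with ⟨n, rfl⟩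
        simp [Nat.add_comm 1 n, Nat.factorial_succ]
      have hde : ((k:ℝ) / Real.exp 1) ^ k = (k:ℝ) ^ k * Real.exp (-(k:ℝ)) := by
        rw [div_pow, ← Real.exp_nat_mul, mul_one, Real.exp_neg, div_eq_mul_inv]
      have hsq : Real.sqrt (2 * k : ℝ) = Real.sqrt 2 * b := by
        rw [show (2 * (k:ℝ)) = 2 * b ^ 2 by rw [hbk],
          Real.sqrt_mul (by norm_num : (0:ℝ) ≤ 2), Real.sqrt_sq hb0.le]
      have hpi : (2:ℝ) ≤ Real.sqrt π * Real.sqrt 2 := by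
        rw [← Real.sqrt_mul Real.pi_pos.le]
        have : (4:ℝ) ≤ π * 2 := by nlinarith [Real.pi_gt_three]
        calc (2:ℝ) = Real.sqrt 4 := by
              rw [show (4:ℝ) = 2^2 by norm_num, Real.sqrt_sq (by norm_num)]
          _ ≤ Real.sqrt (π * 2) := Real.sqrt_le_sqrt this
      have hkexp : 0 < (k:ℝ) ^ k * Real.exp (-(k:ℝ)) := by positivity
      calc 4 * b * ((k:ℝ) ^ k * Real.exp (-(k:ℝ)))
          ≤ 2 * (Real.sqrt π * Real.sqrt 2) * b * ((k:ℝ) ^ k * Real.exp (-(k:ℝ))) := by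
            nlinarith [mul_le_mul_of_nonneg_right hpi (mul_pos hb0 hkexp).le]
        _ = 2 * (Real.sqrt π * (Real.sqrt (2 * k : ℝ) * ((k:ℝ) / Real.exp 1) ^ k)) := by
            rw [hsq, hde]; ring
        _ ≤ 2 * (Nat.factorial k : ℝ) := by linarith
        _ = 2 * k * (Nat.factorial (k-1)) := by rw [hfact]; ring
    have hxe : 0 ≤ x ^ k * Real.exp (-x) := by positivity
    have habs0 : 0 ≤ |((k:ℝ) - 1) - x| := abs_nonneg _
    calc |((k:ℝ) - 1) - x| * (x ^ k * Real.exp (-x))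
        ≤ (2 * b * u + u ^ 2 + 1) * ((k:ℝ) ^ k * Real.exp (-(k:ℝ)) * Real.exp (-u ^ 2)) := by
          apply mul_le_mul h1 h2 hxe (by nlinarith)
      _ = (2 * b * u + u ^ 2 + 1) * Real.exp (-u ^ 2) * ((k:ℝ) ^ k * Real.exp (-(k:ℝ))) := by
          ring
      _ ≤ 4 * b * ((k:ℝ) ^ k * Real.exp (-(k:ℝ))) := by
          have hkexp : 0 ≤ (k:ℝ) ^ k * Real.exp (-(k:ℝ)) := by positivity
          exact mul_le_mul_of_nonneg_right h3 hkexp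
      _ ≤ 2 * k * (Nat.factorial (k-1)) := h4
  calc x ^ 2 * |Hsecond k x|
      = |((k:ℝ) - 1) - x| * (x ^ k * Real.exp (-x)) / (Nat.factorial (k-1)) := by
        rw [habs]; rw [div_eq_mul_inv, div_eq_mul_inv, ← hpow]; ring
    _ ≤ 2 * k * (Nat.factorial (k-1)) / (Nat.factorial (k-1)) := by
        gcongr
    _ = 2 * k := by field_simp

/-- There is a finite constant `M > 0` such that for every integer `k ≥ 1` and every `x ≥ 0`,
`x² |H_k''(x)| ≤ M·k`; moreover `sup_{k ≥ 1} sup_{x ≥ 0} x²|H_k''(x)|/k > 0`. -/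
theorem x_sq_Hsecond_bound :
    ∃ M : ℝ, 0 < M ∧
      (∀ k : ℕ, 1 ≤ k → ∀ x : ℝ, 0 ≤ x → x ^ 2 * |Hsecond k x| ≤ M * k) ∧
      0 < sSup {y : ℝ | ∃ k : ℕ, 1 ≤ k ∧ ∃ x : ℝ, 0 ≤ x ∧ y = x ^ 2 * |Hsecond k x| / k} := by
  refine ⟨2, by norm_num, fun k hk x hx => main_bound k hk x hx, ?_⟩
  have hval : (1:ℝ) ^ 2 * |Hsecond 1 1| / (1:ℕ) = Real.exp (-1) := by
    unfold Hsecond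
    norm_num [Real.one_rpow, abs_of_pos (Real.exp_pos (-1:ℝ))]
  have hmem : Real.exp (-1) ∈
      {y : ℝ | ∃ k : ℕ, 1 ≤ k ∧ ∃ x : ℝ, 0 ≤ x ∧ y = x ^ 2 * |Hsecond k x| / k} :=
    ⟨1, le_refl 1, 1, zero_le_one, hval.symm⟩
  have hbdd : BddAbove {y : ℝ | ∃ k : ℕ, 1 ≤ k ∧ ∃ x : ℝ, 0 ≤ x ∧
      y = x ^ 2 * |Hsecond k x| / k} := by
    refine ⟨2, fun y hy => ?_⟩
    obtain ⟨k, hk, x, hx, rfl⟩ := hy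
    have hk0 : (0:ℝ) < k := by exact_mod_cast hk
    rw [div_le_iff₀ hk0]
    exact main_bound k hk x hx
  calc (0:ℝ) < Real.exp (-1) := Real.exp_pos _
    _ ≤ sSup _ := le_csSup hbdd hmem
end
end

section
/- For every integer k ≥ 1 and every real x > 0 with k/x ≤ 1/2, the Gamma(k,1) tail satisfies 1 - H_k(x) ≤ 2 x^{k-1} e^{-x}/(k-1)!. -/
open MeasureTheory Real Filter Set

noncomputable section

/-- `Hcdf k` : the Gamma(k,1) distribution function. -/
def Hcdf (k : ℕ) (x : ℝ) : ℝ :=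
  ∫ t in (0:ℝ)..x, t ^ (k - 1) * Real.exp (-t) / (Nat.factorial (k - 1))

private lemma sum_hasDerivAt (k : ℕ) (t : ℝ) :
    HasDerivAt (fun s : ℝ => ∑ j ∈ Finset.range k, s ^ j / (Nat.factorial j))
      (∑ j ∈ Finset.range (k - 1), t ^ j / (Nat.factorial j)) t := by
  cases k with
  | zero => simpa using (hasDerivAt_const t (0:ℝ))
  | succ n =>
    have h : HasDerivAt (fun s : ℝ => ∑ j ∈ Finset.range (n+1), s ^ j / (Nat.factorial j))
        (∑ j ∈ Finset.range (n+1), (j : ℝ) * t ^ (j - 1) / (Nat.factorial j)) t := by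
      apply HasDerivAt.fun_sum
      intro j _
      simpa using ((hasDerivAt_pow j t).div_const (Nat.factorial j : ℝ))
    convert h using 1
    rw [Finset.sum_range_succ' (fun j => (j : ℝ) * t ^ (j - 1) / (Nat.factorial j))]
    simp only [Nat.cast_zero, zero_mul, Nat.factorial_zero, Nat.cast_one, zero_div, add_zero,
      Nat.add_sub_cancel]
    apply Finset.sum_congr rfl
    intro i _
    push_cast [Nat.factorial_succ]
    field_simp

private lemma Hcdf_eq (k : ℕ) (hk : 1 ≤ k) (x : ℝ) :
    Hcdf k x = 1 - Real.exp (-x) * ∑ j ∈ Finset.range k, x ^ j / (Nat.factorial j) := by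
  set F : ℝ → ℝ := fun s => -(Real.exp (-s) * ∑ j ∈ Finset.range k, s ^ j / (Nat.factorial j))
    with hF
  have hderiv : ∀ t : ℝ, HasDerivAt F (t ^ (k - 1) * Real.exp (-t) / (Nat.factorial (k - 1))) t := by
    intro t
    have he : HasDerivAt (fun s : ℝ => Real.exp (-s)) (-Real.exp (-t)) t := by
      simpa using ((hasDerivAt_id t).neg).exp
    have h := (he.fun_mul (sum_hasDerivAt k t)).fun_neg
    refine h.congr_deriv (Eq.symm ?_)
    obtain ⟨n, rfl⟩ : ∃ n, k = n + 1 := ⟨k - 1, by omega⟩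
    rw [Finset.sum_range_succ]
    simp only [Nat.add_sub_cancel_left, Nat.add_sub_cancel]
    ring_nf
  have hint : IntervalIntegrable
      (fun t : ℝ => t ^ (k - 1) * Real.exp (-t) / (Nat.factorial (k - 1)))
      volume 0 x := by
    apply Continuous.intervalIntegrable
    continuity
  have := intervalIntegral.integral_eq_sub_of_hasDerivAt
    (fun t _ => hderiv t) hint
  rw [Hcdf, this, hF]
  have h0 : ∑ j ∈ Finset.range k, (0:ℝ) ^ j / (Nat.factorial j) = 1 := by
    rw [Finset.sum_eq_single 0]
    · simp
    · intro j _ hj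
      simp [zero_pow hj]
    · intro h; exact absurd (Finset.mem_range.mpr hk) h
  simp [h0]
  ring

/-- For every integer `k ≥ 1` and every real `x > 0` with `k/x ≤ 1/2`, the Gamma(k,1) tail
satisfies `1 - H_k(x) ≤ 2 x^{k-1} e^{-x}/(k-1)!`. -/
theorem gamma_tail_bound (k : ℕ) (hk : 1 ≤ k) (x : ℝ) (hx : 0 < x)
    (hkx : (k : ℝ) / x ≤ 1 / 2) :
    1 - Hcdf k x ≤ 2 * x ^ (k - 1) * Real.exp (-x) / (Nat.factorial (k - 1)) := by
  rw [Hcdf_eq k hk x]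
  have hC : (0:ℝ) ≤ x ^ (k - 1) / (Nat.factorial (k - 1)) := by positivity
  -- term bound
  have hterm : ∀ d m : ℕ, m + d = k - 1 →
      x ^ m / (Nat.factorial m) ≤ (1/2) ^ d * (x ^ (k - 1) / (Nat.factorial (k - 1))) := by
    intro d
    induction d with
    | zero => intro m hm; subst hm; simp
    | succ n ih =>
      intro m hm
      have hm1 : m + 1 + n = k - 1 := by omega
      have h1 : x ^ m / (Nat.factorial m)
          ≤ (1/2) * (x ^ (m + 1) / (Nat.factorial (m + 1))) := by
        have hmk : ((m : ℝ) + 1) / x ≤ 1 / 2 := by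
          apply le_trans _ hkx
          gcongr
          exact_mod_cast Nat.le_of_lt_succ (by omega : m + 1 < k + 1)
        have hxpos : (0:ℝ) < x ^ (m+1) / (Nat.factorial (m+1)) ∨
            (0:ℝ) = x ^ (m+1) / (Nat.factorial (m+1)) := by
          left; positivity
        have key : x ^ m / (Nat.factorial m)
            = ((m : ℝ) + 1) / x * (x ^ (m + 1) / (Nat.factorial (m + 1))) := by
          rw [pow_succ]
          push_cast [Nat.factorial_succ]
          field_simp
        rw [key]
        apply mul_le_mul_of_nonneg_right hmk (by positivity)
      calc x ^ m / (Nat.factorial m)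
          ≤ (1/2) * (x ^ (m + 1) / (Nat.factorial (m + 1))) := h1
        _ ≤ (1/2) * ((1/2) ^ n * (x ^ (k - 1) / (Nat.factorial (k - 1)))) := by
            apply mul_le_mul_of_nonneg_left (ih (m+1) hm1) (by norm_num)
        _ = (1/2) ^ (n + 1) * (x ^ (k - 1) / (Nat.factorial (k - 1))) := by ring
  have hsum : ∑ j ∈ Finset.range k, x ^ j / (Nat.factorial j)
      ≤ 2 * (x ^ (k - 1) / (Nat.factorial (k - 1))) := by
    calc ∑ j ∈ Finset.range k, x ^ j / (Nat.factorial j)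
        ≤ ∑ j ∈ Finset.range k, (1/2:ℝ) ^ (k - 1 - j) * (x ^ (k - 1) / (Nat.factorial (k - 1))) := by
          apply Finset.sum_le_sum
          intro j hj
          have hjk := Finset.mem_range.mp hj
          exact hterm (k - 1 - j) j (by omega)
      _ = (∑ j ∈ Finset.range k, (1/2:ℝ) ^ (k - 1 - j)) * (x ^ (k - 1) / (Nat.factorial (k - 1))) := by
          rw [Finset.sum_mul]
      _ ≤ 2 * (x ^ (k - 1) / (Nat.factorial (k - 1))) := by
          apply mul_le_mul_of_nonneg_right _ hC
          have : ∑ j ∈ Finset.range k, (1/2:ℝ) ^ (k - 1 - j)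
              = ∑ i ∈ Finset.range k, (1/2:ℝ) ^ i := by
            rw [← Finset.sum_range_reflect]
            apply Finset.sum_congr rfl
            intro i hi
            have := Finset.mem_range.mp hi
            congr 1
            omega
          rw [this]
          calc ∑ i ∈ Finset.range k, (1/2:ℝ) ^ i
              ≤ ∑' i : ℕ, (1/2:ℝ) ^ i := by
                apply Summable.sum_le_tsum _ (fun i _ => by positivity)
                exact summable_geometric_of_lt_one (by norm_num) (by norm_num)
            _ = 2 := by
                rw [tsum_geometric_of_lt_one (by norm_num) (by norm_num)]
                norm_num
  have hexp : (0:ℝ) < Real.exp (-x) := Real.exp_pos _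
  have := mul_le_mul_of_nonneg_left hsum hexp.le
  calc 1 - (1 - Real.exp (-x) * ∑ j ∈ Finset.range k, x ^ j / (Nat.factorial j))
      = Real.exp (-x) * ∑ j ∈ Finset.range k, x ^ j / (Nat.factorial j) := by ring
    _ ≤ Real.exp (-x) * (2 * (x ^ (k - 1) / (Nat.factorial (k - 1)))) := this
    _ = 2 * x ^ (k - 1) * Real.exp (-x) / (Nat.factorial (k - 1)) := by ring
end
end

section
/- Let E_1, E_2, ... be i.i.d. exponential random variables with mean 1, S_m = E_1 + ... + E_m, and let (k(N))_{N ≥ 1} be positive integers with k(N)/N → 0 as N → ∞. Then for every ε > 0 the series Σ_N P( S_{k(N)} > ε (2 N k(N) log log(N k(N)))^{1/2} ) converges (the sum being taken over those N with log log(N k(N)) > 0). -/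
set_option maxHeartbeats 1000000


open MeasureTheory ProbabilityTheory Real Filter Set

noncomputable section

namespace SummableProbAux

open scoped ENNReal NNReal

lemma meas_exp_half : Measurable fun x : ℝ => Real.exp (2⁻¹ * x) := by fun_prop

lemma lint_exp_half :
    ∫⁻ x, ENNReal.ofReal (Real.exp (2⁻¹ * x)) ∂(expMeasure 1) = 2 := by
  have hmeas : Measurable (exponentialPDF 1) :=
    (measurable_exponentialPDFReal 1).ennreal_ofReal
  have hg : Measurable fun x : ℝ => ENNReal.ofReal (Real.exp (2⁻¹ * x)) :=
    meas_exp_half.ennreal_ofReal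
  rw [show expMeasure 1 = volume.withDensity (exponentialPDF 1) from rfl,
    lintegral_withDensity_eq_lintegral_mul _ hmeas hg]
  have heq : ∫⁻ x, (exponentialPDF 1 * fun x => ENNReal.ofReal (Real.exp (2⁻¹ * x))) x
      = ∫⁻ x, (Ici (0:ℝ)).indicator (fun x => ENNReal.ofReal (Real.exp (-(2⁻¹ * x)))) x := by
    refine lintegral_congr fun x => ?_
    by_cases hx : 0 ≤ x
    · simp only [Pi.mul_apply, exponentialPDF_of_nonneg hx, indicator_of_mem (mem_Ici.mpr hx)]
      rw [← ENNReal.ofReal_mul (by positivity), one_mul, ← Real.exp_add]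
      ring_nf
    · have hx' : x ∉ Ici (0:ℝ) := fun h => hx (mem_Ici.mp h)
      simp only [Pi.mul_apply, exponentialPDF_of_neg (lt_of_not_ge hx),
        indicator_of_notMem hx', zero_mul]
  rw [heq, lintegral_indicator measurableSet_Ici _,
    setLIntegral_congr (Filter.EventuallyEq.symm Ioi_ae_eq_Ici)]
  have hInt : IntegrableOn (fun x : ℝ => Real.exp (-(2⁻¹ * x))) (Ioi 0) := by
    simpa [neg_mul] using exp_neg_integrableOn_Ioi 0 (by norm_num : (0:ℝ) < 2⁻¹)
  rw [← ofReal_integral_eq_lintegral_ofReal hInt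
    (ae_of_all _ fun x => (Real.exp_pos _).le)]
  have hval : (∫ x in Ioi (0:ℝ), Real.exp (-(2⁻¹ * x))) = 2 := by
    have := integral_comp_mul_left_Ioi (fun y => Real.exp (-y)) 0
      (by norm_num : (0:ℝ) < 2⁻¹)
    simp only [mul_zero] at this
    rw [this, integral_exp_neg_Ioi_zero]
    norm_num
  rw [hval]
  norm_num

lemma integrable_exp_half : Integrable (fun x : ℝ => Real.exp (2⁻¹ * x)) (expMeasure 1) := by
  refine ⟨meas_exp_half.aestronglyMeasurable, ?_⟩
  rw [HasFiniteIntegral]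
  have h : ∀ x : ℝ, ‖Real.exp (2⁻¹ * x)‖ₑ = ENNReal.ofReal (Real.exp (2⁻¹ * x)) :=
    fun x => Real.enorm_eq_ofReal (Real.exp_pos _).le
  simp_rw [h, lint_exp_half]
  norm_num

variable {Ω : Type*} [MeasurableSpace Ω] {μ : Measure Ω}

lemma integrable_exp_half_comp {X : Ω → ℝ} (hX : Measurable X)
    (hd : Measure.map X μ = expMeasure 1) :
    Integrable (fun ω => Real.exp (2⁻¹ * X ω)) μ := by
  have h := integrable_exp_half
  rw [← hd] at h
  exact (integrable_map_measure meas_exp_half.aestronglyMeasurable hX.aemeasurable).mp h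

lemma mgf_exp_half {X : Ω → ℝ} (hX : Measurable X)
    (hd : Measure.map X μ = expMeasure 1) :
    mgf X μ 2⁻¹ = 2 := by
  have h : mgf X μ 2⁻¹ = ∫ x, Real.exp (2⁻¹ * x) ∂(Measure.map X μ) :=
    (integral_map hX.aemeasurable meas_exp_half.aestronglyMeasurable).symm
  rw [h, hd, integral_eq_lintegral_of_nonneg_ae
    (ae_of_all _ fun x => (Real.exp_pos _).le)
    meas_exp_half.aestronglyMeasurable, lint_exp_half]
  norm_num

lemma chernoff [IsProbabilityMeasure μ] (E : ℕ → Ω → ℝ) (hmeas : ∀ i, Measurable (E i))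
    (hindep : iIndepFun E μ)
    (hdist : ∀ i, Measure.map (E i) μ = expMeasure 1) (n : ℕ) (t : ℝ) :
    (μ {ω | t < ∑ j ∈ Finset.range n, E j ω}).toReal ≤ Real.exp (-(2⁻¹) * t) * 2 ^ n := by
  have hint : ∀ i ∈ Finset.range n, Integrable (fun ω => Real.exp (2⁻¹ * E i ω)) μ :=
    fun i _ => integrable_exp_half_comp (hmeas i) (hdist i)
  have hInt := hindep.integrable_exp_mul_sum hmeas hint
  have h1 : (μ {ω | t < ∑ j ∈ Finset.range n, E j ω}).toReal
      ≤ (μ {ω | t ≤ (∑ j ∈ Finset.range n, E j) ω}).toReal := by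
    refine ENNReal.toReal_mono (measure_ne_top _ _) (measure_mono fun ω hω => ?_)
    simp only [mem_setOf_eq, Finset.sum_apply]
    exact le_of_lt hω
  refine h1.trans ?_
  have h2 := measure_ge_le_exp_mul_mgf (X := ∑ j ∈ Finset.range n, E j) (μ := μ)
    (t := 2⁻¹) t (by norm_num) hInt
  rw [hindep.mgf_sum hmeas] at h2
  have h3 : (∏ j ∈ Finset.range n, mgf (E j) μ 2⁻¹) = 2 ^ n := by
    rw [Finset.prod_congr rfl fun j _ => mgf_exp_half (hmeas j) (hdist j)]
    simp
  rw [h3] at h2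
  exact h2

end SummableProbAux

open SummableProbAux

/-- Let `E_1, E_2, ...` be i.i.d. exponential mean-1 random variables,
`S_m = E_1 + ... + E_m`, and `(k(N))` positive integers with `k(N)/N → 0`. Then for every
`ε > 0` the series `Σ_N P(S_{k(N)} > ε (2 N k(N) log log(N k(N)))^{1/2})` converges
(the sum being over those `N` with `log log(N k(N)) > 0`). -/
theorem summable_prob_Sk_large {Ω : Type*} [MeasurableSpace Ω] (μ : Measure Ω)
    [IsProbabilityMeasure μ] (E : ℕ → Ω → ℝ) (hmeas : ∀ i, Measurable (E i))
    (hindep : iIndepFun E μ)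
    (hdist : ∀ i, Measure.map (E i) μ = expMeasure 1)
    (k : ℕ → ℕ) (hk : ∀ N, 1 ≤ k N)
    (hkN : Tendsto (fun N : ℕ => (k N : ℝ) / N) atTop (nhds 0))
    (ε : ℝ) (hε : 0 < ε) :
    Summable (fun N : ℕ =>
      if 0 < Real.log (Real.log ((N : ℝ) * k N)) then
        (μ {ω | ε * Real.sqrt (2 * N * k N * Real.log (Real.log ((N : ℝ) * k N))) <
            ∑ j ∈ Finset.range (k N), E j ω}).toReal
      else 0) := by
  have hlog2 : (0:ℝ) < Real.log 2 := Real.log_pos one_lt_two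
  -- eventual facts
  have hA : ∀ᶠ N : ℕ in atTop, (k N : ℝ) / N ≤ ε ^ 2 / (8 * Real.log 2 ^ 2) :=
    hkN.eventually (eventually_le_nhds (by positivity))
  have hB : ∀ᶠ N : ℕ in atTop, 1 ≤ Real.log (Real.log N) := by
    have h : Tendsto (fun N : ℕ => Real.log (Real.log N)) atTop atTop :=
      (Real.tendsto_log_atTop.comp Real.tendsto_log_atTop).comp tendsto_natCast_atTop_atTop
    exact h.eventually_ge_atTop 1
  have hC : ∀ᶠ N : ℕ in atTop, Real.log N ≤ ε * Real.sqrt 2 / 8 * Real.sqrt N := by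
    have hlo : (fun N : ℕ => Real.log N) =o[atTop] fun N : ℕ => (N : ℝ) ^ (1/2 : ℝ) :=
      (isLittleO_log_rpow_atTop one_half_pos).comp_tendsto tendsto_natCast_atTop_atTop
    filter_upwards [hlo.def (show (0:ℝ) < ε * Real.sqrt 2 / 8 by positivity),
      eventually_ge_atTop 1] with N hN h1N
    have h1 : (1:ℝ) ≤ N := by exact_mod_cast h1N
    have hlogN : 0 ≤ Real.log N := Real.log_nonneg h1
    rw [Real.norm_eq_abs, Real.norm_eq_abs, abs_of_nonneg hlogN,
      abs_of_nonneg (by positivity)] at hN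
    rwa [← Real.sqrt_eq_rpow] at hN
  have hD : ∀ᶠ N : ℕ in atTop, 3 ≤ N := eventually_ge_atTop 3
  -- comparison
  refine summable_of_isBigO_nat
    (Real.summable_one_div_nat_pow.mpr one_lt_two) ?_
  rw [Asymptotics.isBigO_iff]
  refine ⟨1, ?_⟩
  filter_upwards [hA, hB, hC, hD] with N h1 h2 h3 h4
  set K : ℝ := (k N : ℝ) with hKdef
  have h3N : (3:ℝ) ≤ N := by exact_mod_cast h4
  have hNpos : (0:ℝ) < N := by linarith
  have hK1 : (1:ℝ) ≤ K := by rw [hKdef]; exact_mod_cast hk N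
  set L : ℝ := Real.log (Real.log ((N : ℝ) * K)) with hLdef
  -- `L ≥ 1`
  have hlog3 : (1:ℝ) ≤ Real.log 3 := by
    rw [Real.le_log_iff_exp_le (by norm_num : (0:ℝ) < 3)]
    exact (Real.exp_one_lt_d9.le).trans (by norm_num)
  have hlogN1 : (1:ℝ) ≤ Real.log N :=
    hlog3.trans (Real.log_le_log (by norm_num) h3N)
  have hNK : (N:ℝ) ≤ N * K := le_mul_of_one_le_right hNpos.le hK1
  have hlogNK : Real.log N ≤ Real.log (N * K) := Real.log_le_log hNpos hNK
  have hLL : Real.log (Real.log N) ≤ L :=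
    Real.log_le_log (by linarith) hlogNK
  have hL1 : (1:ℝ) ≤ L := h2.trans hLL
  -- sqrt chain
  have hb1 : Real.sqrt (2 * N * K) ≤ Real.sqrt (2 * N * K * L) :=
    Real.sqrt_le_sqrt (by nlinarith)
  have hb2 : Real.sqrt (2 * N) ≤ Real.sqrt (2 * N * K) :=
    Real.sqrt_le_sqrt (by nlinarith)
  -- key bounds
  have hc1 : K * Real.log 2 ≤ ε / 4 * Real.sqrt (2 * N * K) := by
    have hrw : ε / 4 * Real.sqrt (2 * N * K) = Real.sqrt ((ε / 4) ^ 2 * (2 * N * K)) := by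
      rw [Real.sqrt_mul (sq_nonneg _), Real.sqrt_sq (by positivity)]
    rw [hrw]
    rw [Real.le_sqrt (by positivity) (by positivity)]
    have h1' : K * (8 * Real.log 2 ^ 2) ≤ N * ε ^ 2 := by
      rw [div_le_div_iff₀ hNpos (by positivity)] at h1
      linarith
    nlinarith [mul_le_mul_of_nonneg_left h1' (by positivity : (0:ℝ) ≤ K / 8)]
  have hc2 : 2 * Real.log N ≤ ε / 4 * Real.sqrt (2 * N) := by
    have hrw : Real.sqrt (2 * (N:ℝ)) = Real.sqrt 2 * Real.sqrt N :=
      Real.sqrt_mul (by norm_num) _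
    rw [hrw]
    nlinarith [h3]
  have hkey : K * Real.log 2 + 2 * Real.log N ≤ ε / 2 * Real.sqrt (2 * N * K * L) := by
    have e1 : ε / 4 * Real.sqrt (2 * N * K) ≤ ε / 4 * Real.sqrt (2 * N * K * L) :=
      mul_le_mul_of_nonneg_left hb1 (by positivity)
    have e2 : ε / 4 * Real.sqrt (2 * N) ≤ ε / 4 * Real.sqrt (2 * N * K * L) :=
      mul_le_mul_of_nonneg_left (hb2.trans hb1) (by positivity)
    linarith
  -- final bound
  have hfin : (if 0 < L then
      (μ {ω | ε * Real.sqrt (2 * N * K * L) <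
          ∑ j ∈ Finset.range (k N), E j ω}).toReal else 0) ≤ 1 / (N:ℝ) ^ 2 := by
    have hrhs : Real.exp (-(2 * Real.log N)) = 1 / (N:ℝ) ^ 2 := by
      rw [Real.exp_neg, two_mul, Real.exp_add, Real.exp_log hNpos, one_div, pow_two]
    split_ifs with hL
    · refine (chernoff E hmeas hindep hdist (k N)
        (ε * Real.sqrt (2 * N * K * L))).trans ?_
      have h2pow : (2:ℝ) ^ (k N) = Real.exp (K * Real.log 2) := by
        rw [Real.exp_nat_mul, Real.exp_log (by norm_num : (0:ℝ) < 2)]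
      rw [h2pow, ← Real.exp_add, ← hrhs]
      apply Real.exp_le_exp.mpr
      have : 2⁻¹ * ε = ε / 2 := by ring
      nlinarith [hkey]
    · positivity
  -- conclude
  have hnn : (0:ℝ) ≤ (if 0 < L then
      (μ {ω | ε * Real.sqrt (2 * N * K * L) <
          ∑ j ∈ Finset.range (k N), E j ω}).toReal else 0) := by
    split_ifs <;> positivity
  rw [Real.norm_eq_abs, Real.norm_eq_abs, abs_of_nonneg hnn, abs_of_nonneg (by positivity),
    one_mul]
  exact hfin
end
end
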